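/- Let q ∈ ℂ[[t]] with q(0) = 1 and let φ = z + z̄ + O₃ be a normalized formal power series. Define κ = ∂₁₂S_q(φ⁻,φ)·( λ⁻¹·φ_z⁻·φ_z̄ − λ·φ_z̄⁻·φ_z ). Then κ − [κ] = Ẽ( ∂_z(ℰ(q,φ))·φ_z̄ − ∂_z̄(ℰ(q,φ))·φ_z ); in particular ∂_z(ℰ(q,φ))·φ_z̄ − ∂_z̄(ℰ(q,φ))·φ_z = κ − κ⁺. -/

import Mathlib

/- Common setup: formal power series in two commuting variables `z, z̄` over `ℂ`,
represented by their coefficient functions, together with the operators of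
Treschev's linearizable billiard construction. -/

open scoped BigOperators

noncomputable section

namespace Treschev

/-- A formal power series `f = Σ_{j,k≥0} f_{j,k} z^j z̄^k`, given by its coefficients. -/
abbrev FPS : Type := ℕ → ℕ → ℂ

/-- A formal power series in one variable `t`, given by its coefficients. -/
abbrev OPS : Type := ℕ → ℂ

/-- Product of two formal power series (Cauchy product). -/
def fmul (f g : FPS) : FPS := fun j k =>
  ∑ a ∈ Finset.range (j + 1), ∑ b ∈ Finset.range (k + 1), f a b * g (j - a) (k - b)

/-- The constant series `1`. -/
def oneF : FPS := fun j k => if j = 0 ∧ k = 0 then 1 else 0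

/-- Powers of a formal power series. -/
def fpow (f : FPS) : ℕ → FPS
  | 0 => oneF
  | n + 1 => fmul f (fpow f n)

/-- Substitution of a two-variable series `u` with zero constant term into a
one-variable series `q` (the formula is the correct one whenever `u 0 0 = 0`). -/
def substOne (q : OPS) (u : FPS) : FPS := fun j k =>
  ∑ m ∈ Finset.range (j + k + 1), q m * fpow u m j k

/-- Substitution `F(u, v)` of two series with zero constant term into a two-variable
series `F` (the formula is the correct one whenever `u 0 0 = 0` and `v 0 0 = 0`). -/
def subst2 (F : FPS) (u v : FPS) : FPS := fun j k =>
  ∑ m ∈ Finset.range (j + k + 1), ∑ n ∈ Finset.range (j + k + 1),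
    F m n * fmul (fpow u m) (fpow v n) j k

/-- The Taylor series of `cos`. -/
def cosSeries : OPS := fun n => if n % 2 = 0 then (-1 : ℂ) ^ (n / 2) / (n.factorial : ℂ) else 0

/-- `(t₁ + t₂)/2` as a two-variable series. -/
def halfSum : FPS := fun j k =>
  if j = 1 ∧ k = 0 then (1 / 2 : ℂ) else if j = 0 ∧ k = 1 then (1 / 2 : ℂ) else 0

/-- `(t₁ − t₂)/2` as a two-variable series. -/
def halfDiff : FPS := fun j k =>
  if j = 1 ∧ k = 0 then (1 / 2 : ℂ) else if j = 0 ∧ k = 1 then (-(1 / 2) : ℂ) else 0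

/-- The generating function `S_q(t₁,t₂) = q((t₁+t₂)/2)·cos((t₁−t₂)/2)` as a
formal power series in `t₁, t₂`. -/
def Sq (q : OPS) : FPS := fmul (substOne q halfSum) (substOne cosSeries halfDiff)

/-- Formal partial derivative with respect to the first variable. -/
def d1 (f : FPS) : FPS := fun j k => ((j + 1 : ℕ) : ℂ) * f (j + 1) k

/-- Formal partial derivative with respect to the second variable. -/
def d2 (f : FPS) : FPS := fun j k => ((k + 1 : ℕ) : ℂ) * f j (k + 1)

/-- `f⁺`, with `(f⁺)_{j,k} = λ^{j−k} f_{j,k}`. -/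
def plus (l : ℂ) (f : FPS) : FPS := fun j k => l ^ ((j : ℤ) - (k : ℤ)) * f j k

/-- `f⁻`, with `(f⁻)_{j,k} = λ^{k−j} f_{j,k}`. -/
def minus (l : ℂ) (f : FPS) : FPS := fun j k => l ^ ((k : ℤ) - (j : ℤ)) * f j k

/-- `∇f = f⁻ − λ⁻¹ f`. -/
def nab (l : ℂ) (f : FPS) : FPS := minus l f - l⁻¹ • f

/-- `∇⁺f = f − λ f⁺`. -/
def nabPlus (l : ℂ) (f : FPS) : FPS := f - l • plus l f

/-- The average `[f] = Σ_j f_{j,j} (z z̄)^j`. -/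
def avg (f : FPS) : FPS := fun j k => if j = k then f j k else 0

/-- The projection `Π₊(f) = [z f]/z`. -/
def Pip (f : FPS) : FPS := fun j k => if k = j + 1 then f j k else 0

/-- The projection `Π(f) = [z̄ f]/z̄`. -/
def Pim (f : FPS) : FPS := fun j k => if j = k + 1 then f j k else 0

/-- `E⁺`, the partial inverse of `∇⁺`. -/
def Eplus (l : ℂ) (f : FPS) : FPS := fun j k =>
  if k = j + 1 then 0 else f j k / (1 - l ^ ((j : ℤ) - (k : ℤ) + 1))

/-- `E`, the partial inverse of `∇`. -/
def Emin (l : ℂ) (f : FPS) : FPS := fun j k =>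
  if j = k + 1 then 0 else f j k / (l ^ ((k : ℤ) - (j : ℤ)) - l⁻¹)

/-- `Ẽ`, with `Ẽ(f − f⁺) = f − [f]`. -/
def Etilde (l : ℂ) (f : FPS) : FPS := fun j k =>
  if j = k then 0 else f j k / (1 - l ^ ((j : ℤ) - (k : ℤ)))

/-- `f ∘ I`, where `I(z,z̄) = (z̄,z)`. -/
def swapI (f : FPS) : FPS := fun j k => f k j

/-- Multiplication by `z`. -/
def mulz (f : FPS) : FPS := fun j k => if j = 0 then 0 else f (j - 1) k

/-- Multiplication by `z̄`. -/
def mulzbar (f : FPS) : FPS := fun j k => if k = 0 then 0 else f j (k - 1)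

/-- Division by `z` (valid on series divisible by `z`). -/
def divz (f : FPS) : FPS := fun j k => f (j + 1) k

/-- Multiplicative inverse `1/h` (the geometric-series formula, which is the correct
inverse whenever `h 0 0 ≠ 0`). -/
def finv (h : FPS) : FPS := fun j k =>
  (h 0 0)⁻¹ * ∑ m ∈ Finset.range (j + k + 1),
    fpow (fun a b => if a = 0 ∧ b = 0 then 0 else -(h a b) * (h 0 0)⁻¹) m j k

/-- Quotient `f/h` of formal power series. -/
def fdiv (f h : FPS) : FPS := fmul f (finv h)

/-- `ℰ(q,φ) = ∂₂S_q(φ⁻,φ) + ∂₁S_q(φ,φ⁺)`. -/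
def Err (l : ℂ) (q : OPS) (φ : FPS) : FPS :=
  subst2 (d2 (Sq q)) (minus l φ) φ + subst2 (d1 (Sq q)) φ (plus l φ)

/-- `∂_φℰ(q,φ)(w) = ∂₁₂S_q(φ⁻,φ)w⁻ + ∂₂₂S_q(φ⁻,φ)w + ∂₁₁S_q(φ,φ⁺)w + ∂₁₂S_q(φ,φ⁺)w⁺`. -/
def dErr (l : ℂ) (q : OPS) (φ : FPS) (w : FPS) : FPS :=
  fmul (subst2 (d1 (d2 (Sq q))) (minus l φ) φ) (minus l w)
    + fmul (subst2 (d2 (d2 (Sq q))) (minus l φ) φ) w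
    + fmul (subst2 (d1 (d1 (Sq q))) φ (plus l φ)) w
    + fmul (subst2 (d1 (d2 (Sq q))) φ (plus l φ)) (plus l w)

/-- `h = ∂₁₂S_q(φ⁻,φ)·φ_z·φ_z⁻`. -/
def hFun (l : ℂ) (q : OPS) (φ : FPS) : FPS :=
  fmul (fmul (subst2 (d1 (d2 (Sq q))) (minus l φ) φ) (d1 φ)) (minus l (d1 φ))

/-- `ψ = −E⁺( ℰ(q,φ)·φ_z − Π₊(ℰ(q,φ)·φ_z) )`. -/
def psiFun (l : ℂ) (q : OPS) (φ : FPS) : FPS :=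
  -Eplus l (fmul (Err l q φ) (d1 φ) - Pip (fmul (Err l q φ) (d1 φ)))

/-- `w = φ_z·E( ψ/h − Π(ψ/h) )`. -/
def wFun (l : ℂ) (q : OPS) (φ : FPS) : FPS :=
  fmul (d1 φ)
    (Emin l (fdiv (psiFun l q φ) (hFun l q φ) - Pim (fdiv (psiFun l q φ) (hFun l q φ))))

/-- `κ = ∂₁₂S_q(φ⁻,φ)·(λ⁻¹ φ_z⁻ φ_z̄ − λ φ_z̄⁻ φ_z)`. -/
def kappaFun (l : ℂ) (q : OPS) (φ : FPS) : FPS :=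
  fmul (subst2 (d1 (d2 (Sq q))) (minus l φ) φ)
    (l⁻¹ • fmul (minus l (d1 φ)) (d2 φ) - l • fmul (minus l (d2 φ)) (d1 φ))

/-- `g = φ_z̄ / φ_z`. -/
def gFun (φ : FPS) : FPS := fdiv (d2 φ) (d1 φ)

/-- `R₁ = ( −[z̄·ℰ·φ_z̄] + [z̄·g·[z·ℰ·φ_z]/z] ) / ( λ·z·[κ] )`. -/
def R1Fun (l : ℂ) (q : OPS) (φ : FPS) : FPS :=
  l⁻¹ • fmul (finv (avg (kappaFun l q φ)))
    (divz (-avg (mulzbar (fmul (Err l q φ) (d2 φ)))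
      + avg (mulzbar (fmul (gFun φ) (divz (avg (mulz (fmul (Err l q φ) (d1 φ)))))))))

/-- `R₂ = (1/z)·[ z̄·ψ·(λ⁻¹g − λg⁻)·([κ]−κ)/(κ·[κ]) ]`. -/
def R2Fun (l : ℂ) (q : OPS) (φ : FPS) : FPS :=
  divz (avg (mulzbar
    (fmul (fmul (psiFun l q φ) (l⁻¹ • gFun φ - l • minus l (gFun φ)))
      (fmul (avg (kappaFun l q φ) - kappaFun l q φ)
        (finv (fmul (kappaFun l q φ) (avg (kappaFun l q φ))))))))

/-- `R₃ = [z·∂_z(S_q(φ⁻,φ))]/z − ∇⁺( h·Π(ψ/h) )`. -/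
def R3Fun (l : ℂ) (q : OPS) (φ : FPS) : FPS :=
  Pip (d1 (subst2 (Sq q) (minus l φ) φ))
    - nabPlus l (fmul (hFun l q φ) (Pim (fdiv (psiFun l q φ) (hFun l q φ))))

/-- `R₄ = ∂_z(ℰ(q,φ))·(w/φ_z) + R₃/φ_z`. -/
def R4Fun (l : ℂ) (q : OPS) (φ : FPS) : FPS :=
  fmul (d1 (Err l q φ)) (fdiv (wFun l q φ) (d1 φ)) + fdiv (R3Fun l q φ) (d1 φ)

/-- `φ = z + z̄ + O₃`. -/
def normalized (φ : FPS) : Prop :=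
  φ 0 0 = 0 ∧ φ 1 0 = 1 ∧ φ 0 1 = 1 ∧ φ 2 0 = 0 ∧ φ 1 1 = 0 ∧ φ 0 2 = 0

/-- The weighted norm `‖f‖_ρ = Σ_{j,k} |f_{j,k}| ρ^{j+k} ∈ [0,∞]`. -/
def wnorm (ρ : ℝ) (f : FPS) : ENNReal :=
  ∑' p : ℕ × ℕ, ENNReal.ofReal (‖f p.1 p.2‖ * ρ ^ (p.1 + p.2))

/-- `D(f) = Σ_{n≥1} n f_n (z z̄)^n` for a series in `z z̄`. -/
def Dop (f : FPS) : FPS := fun j k => if j = k then (j : ℂ) * f j k else 0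

/-- `D̄(f − f₀) = Σ_{n≥1} (f_n/n) (z z̄)^n` for a series in `z z̄`. -/
def Dbar (f : FPS) : FPS := fun j k => if j = k ∧ j ≠ 0 then f j k / (j : ℂ) else 0

/-- The constant part `f₀` of a series. -/
def constPart (f : FPS) : FPS := fun j k => if j = 0 ∧ k = 0 then f 0 0 else 0

/-- `ξ₀ = ((λ⁻¹+1)z + (λ+1)z̄)/2`. -/
def xi0 (l : ℂ) : FPS := fun a b =>
  if a = 1 ∧ b = 0 then (l⁻¹ + 1) / 2 else if a = 0 ∧ b = 1 then (l + 1) / 2 else 0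


section AuxProofs

/-! ### Auxiliary lemmas for `kappa_identity` -/

/-- Embedding of `FPS` into iterated power series, to transport ring identities. -/
private def emb (f : FPS) : PowerSeries (PowerSeries ℂ) := PowerSeries.mk fun j => PowerSeries.mk (f j)

private lemma emb_coeff (f : FPS) (j k : ℕ) :
    PowerSeries.coeff k (PowerSeries.coeff j (emb f)) = f j k := by
  simp [emb]

private lemma emb_injective : Function.Injective emb := by
  intro f g h
  funext j k
  rw [← emb_coeff f j k, ← emb_coeff g j k, h]

private lemma emb_fmul (f g : FPS) : emb (fmul f g) = emb f * emb g := by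
  ext j k
  rw [PowerSeries.coeff_mul, map_sum]
  simp only [emb, PowerSeries.coeff_mk]
  rw [Finset.Nat.sum_antidiagonal_eq_sum_range_succ_mk]
  rw [fmul]
  refine Finset.sum_congr rfl fun a _ => ?_
  rw [PowerSeries.coeff_mul, Finset.Nat.sum_antidiagonal_eq_sum_range_succ_mk]
  simp

lemma fmul_comm (f g : FPS) : fmul f g = fmul g f := by
  apply emb_injective; rw [emb_fmul, emb_fmul, mul_comm]

lemma fmul_assoc (f g h : FPS) : fmul (fmul f g) h = fmul f (fmul g h) := by
  apply emb_injective; simp only [emb_fmul]; rw [mul_assoc]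

lemma fmul_add_left (f g h : FPS) : fmul (f + g) h = fmul f h + fmul g h := by
  funext j k
  simp [fmul, add_mul, Finset.sum_add_distrib]

lemma fmul_add_right (f g h : FPS) : fmul f (g + h) = fmul f g + fmul f h := by
  funext j k
  simp [fmul, mul_add, Finset.sum_add_distrib]

lemma fmul_sub_right (f g h : FPS) : fmul f (g - h) = fmul f g - fmul f h := by
  funext j k
  simp [fmul, mul_sub, Finset.sum_sub_distrib]

lemma fmul_smul_left (c : ℂ) (f g : FPS) : fmul (c • f) g = c • fmul f g := by
  funext j k
  simp [fmul, Finset.mul_sum, mul_assoc]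

lemma fmul_smul_right (c : ℂ) (f g : FPS) : fmul f (c • g) = c • fmul f g := by
  funext j k
  simp [fmul, Finset.mul_sum, mul_left_comm]

lemma fmul_oneF_left (f : FPS) : fmul oneF f = f := by
  funext j k
  rw [fmul]
  rw [Finset.sum_eq_single 0]
  · rw [Finset.sum_eq_single 0] <;> simp +contextual [oneF]
  · intro a _ ha
    apply Finset.sum_eq_zero
    simp +contextual [oneF, ha]
  · simp

lemma d1_add (f g : FPS) : d1 (f + g) = d1 f + d1 g := by
  funext j k; simp [d1, mul_add]

lemma d2_add (f g : FPS) : d2 (f + g) = d2 f + d2 g := by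
  funext j k; simp [d2, mul_add]

lemma d1_d2 (f : FPS) : d1 (d2 f) = d2 (d1 f) := by
  funext j k; simp [d1, d2]; ring

lemma d1_oneF : d1 oneF = 0 := by
  funext j k; simp [d1, oneF]

/- swap lemmas -/

lemma swap_swap (f : FPS) : swapI (swapI f) = f := rfl

lemma swap_fmul (f g : FPS) : swapI (fmul f g) = fmul (swapI f) (swapI g) := by
  funext j k
  rw [show swapI (fmul f g) j k = fmul f g k j from rfl, fmul, fmul, Finset.sum_comm]
  rfl

lemma swap_oneF : swapI oneF = oneF := by
  funext j k; simp [swapI, oneF, and_comm]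

lemma swap_fpow (f : FPS) (n : ℕ) : swapI (fpow f n) = fpow (swapI f) n := by
  induction n with
  | zero => exact swap_oneF
  | succ n ih => rw [fpow, fpow, swap_fmul, ih]

lemma swap_add (f g : FPS) : swapI (f + g) = swapI f + swapI g := rfl

lemma swap_subst2 (F u v : FPS) : swapI (subst2 F u v) = subst2 F (swapI u) (swapI v) := by
  funext j k
  show subst2 F u v k j = _
  rw [subst2, subst2]
  rw [show k + j = j + k from Nat.add_comm k j]
  refine Finset.sum_congr rfl fun m _ => Finset.sum_congr rfl fun n _ => ?_
  rw [← swap_fpow, ← swap_fpow, ← swap_fmul]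
  rfl

/- plus / minus lemmas -/

variable {l : ℂ}

lemma plus_minus (hl0 : l ≠ 0) (f : FPS) : plus l (minus l f) = f := by
  funext j k
  show l ^ ((j:ℤ)-k) * (l ^ ((k:ℤ)-j) * f j k) = f j k
  rw [← mul_assoc, ← zpow_add₀ hl0]
  simp

lemma plus_smul (c : ℂ) (f : FPS) : plus l (c • f) = c • plus l f := by
  funext j k
  show l ^ ((j:ℤ)-k) * (c * f j k) = c * (l ^ ((j:ℤ)-k) * f j k)
  ring

lemma plus_sub (f g : FPS) : plus l (f - g) = plus l f - plus l g := by
  funext j k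
  show l ^ ((j:ℤ)-k) * (f j k - g j k) = _
  simp [plus]; ring

lemma plus_fmul (hl0 : l ≠ 0) (f g : FPS) :
    plus l (fmul f g) = fmul (plus l f) (plus l g) := by
  funext j k
  show l ^ ((j:ℤ)-k) * (∑ a ∈ Finset.range (j+1), ∑ b ∈ Finset.range (k+1),
      f a b * g (j-a) (k-b)) = _
  rw [Finset.mul_sum]
  refine Finset.sum_congr rfl fun a ha => ?_
  rw [Finset.mul_sum]
  refine Finset.sum_congr rfl fun b hb => ?_
  show _ = l ^ ((a:ℤ)-b) * f a b * (l ^ (((j-a : ℕ):ℤ)-((k-b : ℕ):ℤ)) * g (j-a) (k-b))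
  have haj : a ≤ j := Nat.lt_succ_iff.mp (Finset.mem_range.mp ha)
  have hbk : b ≤ k := Nat.lt_succ_iff.mp (Finset.mem_range.mp hb)
  rw [Nat.cast_sub haj, Nat.cast_sub hbk]
  rw [show (j:ℤ) - k = ((a:ℤ)-b) + (((j:ℤ)-a) - ((k:ℤ)-b)) by ring, zpow_add₀ hl0]
  ring

lemma plus_oneF : plus l oneF = oneF := by
  funext j k
  rcases eq_or_ne j 0 with rfl | hj <;> rcases eq_or_ne k 0 with rfl | hk <;>
    simp [plus, oneF, *]

lemma plus_fpow (hl0 : l ≠ 0) (f : FPS) (n : ℕ) :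
    plus l (fpow f n) = fpow (plus l f) n := by
  induction n with
  | zero => exact plus_oneF
  | succ n ih => rw [fpow, fpow, plus_fmul hl0, ih]

lemma plus_subst2 (hl0 : l ≠ 0) (F u v : FPS) :
    plus l (subst2 F u v) = subst2 F (plus l u) (plus l v) := by
  funext j k
  show l ^ ((j:ℤ)-k) * (∑ m ∈ Finset.range (j+k+1), ∑ n ∈ Finset.range (j+k+1),
      F m n * fmul (fpow u m) (fpow v n) j k) = _
  rw [Finset.mul_sum, subst2]
  refine Finset.sum_congr rfl fun m _ => ?_
  rw [Finset.mul_sum]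
  refine Finset.sum_congr rfl fun n _ => ?_
  rw [← plus_fpow hl0, ← plus_fpow hl0, ← plus_fmul hl0]
  show _ = F m n * (l ^ ((j:ℤ)-k) * fmul (fpow u m) (fpow v n) j k)
  ring

lemma d1_minus (hl0 : l ≠ 0) (f : FPS) : d1 (minus l f) = l⁻¹ • minus l (d1 f) := by
  funext j k
  show ((j+1:ℕ):ℂ) * (l ^ ((k:ℤ)-((j+1:ℕ):ℤ)) * f (j+1) k)
    = l⁻¹ * (l ^ ((k:ℤ)-j) * (((j+1:ℕ):ℂ) * f (j+1) k))
  rw [show ((k:ℤ)-((j+1:ℕ):ℤ)) = ((k:ℤ)-j) + (-1) by push_cast; ring, zpow_add₀ hl0]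
  simp only [zpow_neg, zpow_one]
  ring

lemma d1_plus (hl0 : l ≠ 0) (f : FPS) : d1 (plus l f) = l • plus l (d1 f) := by
  funext j k
  show ((j+1:ℕ):ℂ) * (l ^ (((j+1:ℕ):ℤ)-k) * f (j+1) k)
    = l * (l ^ ((j:ℤ)-k) * (((j+1:ℕ):ℂ) * f (j+1) k))
  rw [show (((j+1:ℕ):ℤ)-(k:ℤ)) = ((j:ℤ)-k) + 1 by push_cast; ring, zpow_add₀ hl0]
  simp only [zpow_one]
  ring

lemma d2_minus (hl0 : l ≠ 0) (f : FPS) : d2 (minus l f) = l • minus l (d2 f) := by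
  funext j k
  show ((k+1:ℕ):ℂ) * (l ^ (((k+1:ℕ):ℤ)-j) * f j (k+1))
    = l * (l ^ ((k:ℤ)-j) * (((k+1:ℕ):ℂ) * f j (k+1)))
  rw [show ((((k+1:ℕ)):ℤ)-(j:ℤ)) = ((k:ℤ)-j) + 1 by push_cast; ring, zpow_add₀ hl0]
  simp only [zpow_one]
  ring

lemma d2_plus (hl0 : l ≠ 0) (f : FPS) : d2 (plus l f) = l⁻¹ • plus l (d2 f) := by
  funext j k
  show ((k+1:ℕ):ℂ) * (l ^ ((j:ℤ)-((k+1:ℕ):ℤ)) * f j (k+1))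
    = l⁻¹ * (l ^ ((j:ℤ)-k) * (((k+1:ℕ):ℂ) * f j (k+1)))
  rw [show ((j:ℤ)-(((k+1:ℕ)):ℤ)) = ((j:ℤ)-k) + (-1) by push_cast; ring, zpow_add₀ hl0]
  simp only [zpow_neg, zpow_one]
  ring

/- order lemmas -/

lemma fpow_order {u : FPS} (hu : u 0 0 = 0) : ∀ (m j k : ℕ), j + k < m → fpow u m j k = 0 := by
  intro m
  induction m with
  | zero => intro j k h; omega
  | succ m ih =>
    intro j k h
    show fmul u (fpow u m) j k = 0
    rw [fmul]
    refine Finset.sum_eq_zero fun a ha => Finset.sum_eq_zero fun b hb => ?_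
    have ha' := Finset.mem_range.mp ha
    have hb' := Finset.mem_range.mp hb
    rcases Nat.eq_zero_or_pos (a + b) with h0 | hpos
    · have ha0 : a = 0 := by omega
      have hb0 : b = 0 := by omega
      subst ha0; subst hb0
      rw [hu, zero_mul]
    · rw [ih (j-a) (k-b) (by omega), mul_zero]

lemma fmul_order_left {f : FPS} {M : ℕ} (hf : ∀ a b, a + b < M → f a b = 0) (g : FPS)
    {j k : ℕ} (h : j + k < M) : fmul f g j k = 0 := by
  rw [fmul]
  refine Finset.sum_eq_zero fun a ha => Finset.sum_eq_zero fun b hb => ?_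
  have ha' := Finset.mem_range.mp ha
  have hb' := Finset.mem_range.mp hb
  rw [hf a b (by omega), zero_mul]

lemma fmulpow_order {u v : FPS} (hu : u 0 0 = 0) (hv : v 0 0 = 0) (m n : ℕ)
    {j k : ℕ} (h : j + k < m + n) : fmul (fpow u m) (fpow v n) j k = 0 := by
  rw [fmul]
  refine Finset.sum_eq_zero fun a ha => Finset.sum_eq_zero fun b hb => ?_
  have ha' := Finset.mem_range.mp ha
  have hb' := Finset.mem_range.mp hb
  rcases lt_or_ge (a+b) m with h1 | h1
  · rw [fpow_order hu m a b h1, zero_mul]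
  · rw [fpow_order hv n (j-a) (k-b) (by omega), mul_zero]

lemma subst2_ext {u v : FPS} (hu : u 0 0 = 0) (hv : v 0 0 = 0) (F : FPS) (j k N : ℕ)
    (hN : j + k + 1 ≤ N) :
    subst2 F u v j k = ∑ m ∈ Finset.range N, ∑ n ∈ Finset.range N,
      F m n * fmul (fpow u m) (fpow v n) j k := by
  rw [subst2, ← Finset.sum_product', ← Finset.sum_product']
  apply Finset.sum_subset
  · exact Finset.product_subset_product (Finset.range_subset_range.mpr hN) (Finset.range_subset_range.mpr hN)
  · intro p hp hnp
    simp only [Finset.mem_product, Finset.mem_range] at hp hnp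
    have : j + k < p.1 + p.2 := by omega
    rw [fmulpow_order hu hv _ _ this, mul_zero]

/- Leibniz rule -/

lemma d1_fmul (f g : FPS) : d1 (fmul f g) = fmul (d1 f) g + fmul f (d1 g) := by
  funext j k
  show ((j+1:ℕ):ℂ) * fmul f g (j+1) k = fmul (d1 f) g j k + fmul f (d1 g) j k
  rw [fmul, Finset.mul_sum]
  have key : ∀ a ∈ Finset.range (j+1+1),
      ((j+1:ℕ):ℂ) * ∑ b ∈ Finset.range (k+1), f a b * g (j+1-a) (k-b)
      = (∑ b ∈ Finset.range (k+1), (a:ℂ) * (f a b * g (j+1-a) (k-b)))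
      + ∑ b ∈ Finset.range (k+1), ((j+1-a:ℕ):ℂ) * (f a b * g (j+1-a) (k-b)) := by
    intro a ha
    rw [← Finset.sum_add_distrib, Finset.mul_sum]
    refine Finset.sum_congr rfl fun b _ => ?_
    have haj : a ≤ j + 1 := Nat.lt_succ_iff.mp (Finset.mem_range.mp ha)
    have hc : ((j+1:ℕ):ℂ) = (a:ℂ) + ((j+1-a:ℕ):ℂ) := by
      rw [Nat.cast_sub haj]; push_cast; ring
    rw [hc]; ring
  rw [Finset.sum_congr rfl key, Finset.sum_add_distrib]
  congr 1
  · -- first piece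
    rw [Finset.sum_range_succ']
    simp only [Nat.cast_zero, zero_mul, Finset.sum_const_zero, add_zero]
    rw [fmul]
    refine Finset.sum_congr rfl fun a _ => Finset.sum_congr rfl fun b _ => ?_
    show ((a+1:ℕ):ℂ) * (f (a+1) b * g (j+1-(a+1)) (k-b)) = d1 f a b * g (j-a) (k-b)
    rw [show j+1-(a+1) = j - a from by omega, d1]
    ring
  · -- second piece
    rw [Finset.sum_range_succ]
    simp only [Nat.sub_self, Nat.cast_zero, zero_mul, Finset.sum_const_zero, add_zero]
    rw [fmul]
    refine Finset.sum_congr rfl fun a ha => Finset.sum_congr rfl fun b _ => ?_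
    have haj : a ≤ j := Nat.lt_succ_iff.mp (Finset.mem_range.mp ha)
    show ((j+1-a:ℕ):ℂ) * (f a b * g (j+1-a) (k-b)) = f a b * d1 g (j-a) (k-b)
    rw [show j+1-a = (j-a)+1 from by omega, d1]
    ring

lemma d1_fpow (u : FPS) (m : ℕ) : d1 (fpow u m) = (m:ℂ) • fmul (fpow u (m-1)) (d1 u) := by
  induction m with
  | zero => rw [show fpow u 0 = oneF from rfl, d1_oneF, Nat.cast_zero, zero_smul]
  | succ m ih =>
    show d1 (fmul u (fpow u m)) = _
    rw [d1_fmul, ih, fmul_smul_right]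
    simp only [Nat.add_sub_cancel]
    rcases Nat.eq_zero_or_pos m with rfl | hm
    · simp only [Nat.cast_zero, zero_smul, add_zero, Nat.cast_one]
      rw [show fpow u 0 = oneF from rfl, fmul_comm (d1 u) oneF, Nat.cast_one, one_smul]
    · have h1 : m - 1 + 1 = m := Nat.succ_pred_eq_of_pos hm
      rw [← fmul_assoc, show fmul u (fpow u (m-1)) = fpow u m from by
        conv_rhs => rw [← h1, fpow]]
      rw [fmul_comm (d1 u) (fpow u m)]
      funext j k
      show fmul (fpow u m) (d1 u) j k + (m:ℂ) * fmul (fpow u m) (d1 u) j k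
        = ((m+1:ℕ):ℂ) * fmul (fpow u m) (d1 u) j k
      push_cast
      ring

lemma d1_fmulpow (u v : FPS) (m n : ℕ) :
    d1 (fmul (fpow u m) (fpow v n)) = (m:ℂ) • fmul (fmul (fpow u (m-1)) (fpow v n)) (d1 u)
      + (n:ℂ) • fmul (fmul (fpow u m) (fpow v (n-1))) (d1 v) := by
  rw [d1_fmul, d1_fpow, d1_fpow, fmul_smul_left, fmul_smul_right]
  congr 1
  · congr 1
    rw [fmul_assoc, fmul_comm (d1 u), ← fmul_assoc]
  · congr 1
    rw [← fmul_assoc]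

/- linearity of the multiplication coefficient functional -/

private def fmulCoeff (g : FPS) (j k : ℕ) : FPS →ₗ[ℂ] ℂ where
  toFun f := fmul f g j k
  map_add' f₁ f₂ := by simp [fmul, add_mul, Finset.sum_add_distrib]
  map_smul' c f := by simp [fmul, Finset.mul_sum, mul_assoc]

lemma fmul_sum2_left (N : ℕ) (c : ℕ → ℕ → ℂ) (P : ℕ → ℕ → FPS) (g : FPS) (j k : ℕ) :
    fmul (fun a b => ∑ m ∈ Finset.range N, ∑ n ∈ Finset.range N, c m n * P m n a b) g j k
      = ∑ m ∈ Finset.range N, ∑ n ∈ Finset.range N, c m n * fmul (P m n) g j k := by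
  have h : (fun a b => ∑ m ∈ Finset.range N, ∑ n ∈ Finset.range N, c m n * P m n a b)
      = ∑ m ∈ Finset.range N, ∑ n ∈ Finset.range N, c m n • P m n := by
    funext a b
    rw [Finset.sum_apply, Finset.sum_apply]
    refine Finset.sum_congr rfl fun m _ => ?_
    rw [Finset.sum_apply, Finset.sum_apply]
    rfl
  show fmulCoeff g j k _ = _
  rw [h, map_sum]
  refine Finset.sum_congr rfl fun m _ => ?_
  rw [map_sum]
  refine Finset.sum_congr rfl fun n _ => ?_
  rw [map_smul]
  rfl

/- chain rule -/

lemma d1_subst2 {u v : FPS} (hu : u 0 0 = 0) (hv : v 0 0 = 0) (F : FPS) :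
    d1 (subst2 F u v) = fmul (subst2 (d1 F) u v) (d1 u) + fmul (subst2 (d2 F) u v) (d1 v) := by
  funext j k
  set N := j + k + 1 with hNdef
  have hT1 : ∀ m n : ℕ, j + k < m + n → fmul (fmul (fpow u m) (fpow v n)) (d1 u) j k = 0 :=
    fun m n h => fmul_order_left (fun a b hab => fmulpow_order hu hv m n hab) _ h
  have hT2 : ∀ m n : ℕ, j + k < m + n → fmul (fmul (fpow u m) (fpow v n)) (d1 v) j k = 0 :=
    fun m n h => fmul_order_left (fun a b hab => fmulpow_order hu hv m n hab) _ h
  have hL : d1 (subst2 F u v) j k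
      = ∑ m ∈ Finset.range (N+1), ∑ n ∈ Finset.range (N+1),
          F m n * ((m:ℂ) * fmul (fmul (fpow u (m-1)) (fpow v n)) (d1 u) j k
            + (n:ℂ) * fmul (fmul (fpow u m) (fpow v (n-1))) (d1 v) j k) := by
    show ((j+1:ℕ):ℂ) * subst2 F u v (j+1) k = _
    rw [subst2, show j + 1 + k + 1 = N + 1 from by omega, Finset.mul_sum]
    refine Finset.sum_congr rfl fun m _ => ?_
    rw [Finset.mul_sum]
    refine Finset.sum_congr rfl fun n _ => ?_
    have hd := congrFun (congrFun (d1_fmulpow u v m n) j) k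
    have hd' : ((j+1:ℕ):ℂ) * fmul (fpow u m) (fpow v n) (j+1) k
        = (m:ℂ) * fmul (fmul (fpow u (m-1)) (fpow v n)) (d1 u) j k
          + (n:ℂ) * fmul (fmul (fpow u m) (fpow v (n-1))) (d1 v) j k := by
      simpa [d1, Pi.add_apply, Pi.smul_apply, smul_eq_mul] using hd
    rw [mul_left_comm, hd']
  have hR : ∀ G g : FPS, fmul (subst2 G u v) g j k
      = ∑ m ∈ Finset.range N, ∑ n ∈ Finset.range N,
          G m n * fmul (fmul (fpow u m) (fpow v n)) g j k := by
    intro G g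
    have step1 : fmul (subst2 G u v) g j k
        = fmul (fun a b => ∑ m ∈ Finset.range N, ∑ n ∈ Finset.range N,
            G m n * fmul (fpow u m) (fpow v n) a b) g j k := by
      rw [fmul, fmul]
      refine Finset.sum_congr rfl fun a ha => Finset.sum_congr rfl fun b hb => ?_
      have ha' := Finset.mem_range.mp ha
      have hb' := Finset.mem_range.mp hb
      rw [subst2_ext hu hv G a b N (by omega)]
    rw [step1, fmul_sum2_left]
  rw [hL]
  simp only [Pi.add_apply]
  rw [hR (d1 F) (d1 u), hR (d2 F) (d1 v)]
  simp only [mul_add]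
  rw [Finset.sum_congr rfl (fun m _ => Finset.sum_add_distrib), Finset.sum_add_distrib]
  congr 1
  · -- first piece : shift in m
    rw [Finset.sum_range_succ']
    simp only [Nat.cast_zero, zero_mul, mul_zero, Finset.sum_const_zero, add_zero,
      Nat.add_sub_cancel]
    refine Finset.sum_congr rfl fun m hm => ?_
    rw [Finset.sum_range_succ]
    have hz : fmul (fmul (fpow u m) (fpow v N)) (d1 u) j k = 0 := hT1 m N (by omega)
    rw [hz]
    simp only [mul_zero, add_zero]
    refine Finset.sum_congr rfl fun n hn => ?_
    show F (m+1) n * (((m+1:ℕ):ℂ) * _) = d1 F m n * _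
    rw [d1]
    ring
  · -- second piece : shift in n
    rw [Finset.sum_range_succ]
    have hlast : ∑ n ∈ Finset.range (N+1),
        F N n * ((n:ℂ) * fmul (fmul (fpow u N) (fpow v (n-1))) (d1 v) j k) = 0 := by
      refine Finset.sum_eq_zero fun n _ => ?_
      rcases Nat.eq_zero_or_pos n with rfl | hpos
      · simp
      · rw [hT2 N (n-1) (by omega), mul_zero, mul_zero]
    rw [hlast, add_zero]
    refine Finset.sum_congr rfl fun m hm => ?_
    rw [Finset.sum_range_succ']
    simp only [Nat.cast_zero, zero_mul, mul_zero, add_zero, Nat.add_sub_cancel]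
    refine Finset.sum_congr rfl fun n hn => ?_
    show F m (n+1) * (((n+1:ℕ):ℂ) * _) = d2 F m n * _
    rw [d2]
    ring

lemma d2_subst2 {u v : FPS} (hu : u 0 0 = 0) (hv : v 0 0 = 0) (F : FPS) :
    d2 (subst2 F u v) = fmul (subst2 (d1 F) u v) (d2 u) + fmul (subst2 (d2 F) u v) (d2 v) := by
  have key := d1_subst2 (u := swapI u) (v := swapI v) hu hv F
  calc d2 (subst2 F u v) = swapI (d1 (subst2 F (swapI u) (swapI v))) := by
        rw [← swap_subst2]; rfl
    _ = swapI (fmul (subst2 (d1 F) (swapI u) (swapI v)) (d1 (swapI u))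
          + fmul (subst2 (d2 F) (swapI u) (swapI v)) (d1 (swapI v))) := by rw [key]
    _ = _ := by
        rw [swap_add, swap_fmul, swap_fmul, swap_subst2, swap_subst2]
        rfl

/- nonvanishing of 1 - λ^e -/

lemma zpow_ne_one_of_ne (hl0 : l ≠ 0) (hru : ∀ n : ℕ, 0 < n → l ^ n ≠ 1)
    {e : ℤ} (he : e ≠ 0) : l ^ e ≠ 1 := by
  intro h1
  rcases lt_or_gt_of_ne he with hneg | hpos
  · have h2 : l ^ (-e) = 1 := by
      rw [zpow_neg, h1, inv_one]
    have h3 : l ^ ((-e).toNat) = 1 := by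
      rw [← zpow_natCast, Int.toNat_of_nonneg (by omega)]
      exact h2
    exact hru (-e).toNat (by omega) h3
  · have h3 : l ^ (e.toNat) = 1 := by
      rw [← zpow_natCast, Int.toNat_of_nonneg (by omega)]
      exact h1
    exact hru e.toNat (by omega) h3

end AuxProofs

/-- With `κ = ∂₁₂S_q(φ⁻,φ)·(λ⁻¹φ_z⁻φ_z̄ − λφ_z̄⁻φ_z)`:
`κ − [κ] = Ẽ(∂_z(ℰ)·φ_z̄ − ∂_z̄(ℰ)·φ_z)` and `∂_z(ℰ)·φ_z̄ − ∂_z̄(ℰ)·φ_z = κ − κ⁺`. -/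
theorem kappa_identity
    (l : ℂ) (hl : ‖l‖ = 1) (hru : ∀ n : ℕ, 0 < n → l ^ n ≠ 1)
    (q : OPS) (hq0 : q 0 = 1) (φ : FPS) (hφ : normalized φ) :
    kappaFun l q φ - avg (kappaFun l q φ) =
      Etilde l (fmul (d1 (Err l q φ)) (d2 φ) - fmul (d2 (Err l q φ)) (d1 φ)) ∧
    fmul (d1 (Err l q φ)) (d2 φ) - fmul (d2 (Err l q φ)) (d1 φ) =
      kappaFun l q φ - plus l (kappaFun l q φ) := by
  have hl0 : l ≠ 0 := by
    intro h; rw [h] at hl; simp at hl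
  obtain ⟨hφ00, -, -, -, -, -⟩ := hφ
  have hm0 : minus l φ 0 0 = 0 := by simp [minus, hφ00]
  have hp0 : plus l φ 0 0 = 0 := by simp [plus, hφ00]
  set S := Sq q with hS
  have main : fmul (d1 (Err l q φ)) (d2 φ) - fmul (d2 (Err l q φ)) (d1 φ)
      = kappaFun l q φ - plus l (kappaFun l q φ) := by
    have hd1E : d1 (Err l q φ)
        = fmul (subst2 (d1 (d2 S)) (minus l φ) φ) (l⁻¹ • minus l (d1 φ))
          + fmul (subst2 (d2 (d2 S)) (minus l φ) φ) (d1 φ)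
          + (fmul (subst2 (d1 (d1 S)) φ (plus l φ)) (d1 φ)
          + fmul (subst2 (d1 (d2 S)) φ (plus l φ)) (l • plus l (d1 φ))) := by
      show d1 (subst2 (d2 S) (minus l φ) φ + subst2 (d1 S) φ (plus l φ)) = _
      rw [d1_add, d1_subst2 hm0 hφ00, d1_subst2 hφ00 hp0, d1_minus hl0, d1_plus hl0,
        ← d1_d2]
    have hd2E : d2 (Err l q φ)
        = fmul (subst2 (d1 (d2 S)) (minus l φ) φ) (l • minus l (d2 φ))
          + fmul (subst2 (d2 (d2 S)) (minus l φ) φ) (d2 φ)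
          + (fmul (subst2 (d1 (d1 S)) φ (plus l φ)) (d2 φ)
          + fmul (subst2 (d1 (d2 S)) φ (plus l φ)) (l⁻¹ • plus l (d2 φ))) := by
      show d2 (subst2 (d2 S) (minus l φ) φ + subst2 (d1 S) φ (plus l φ)) = _
      rw [d2_add, d2_subst2 hm0 hφ00, d2_subst2 hφ00 hp0, d2_minus hl0, d2_plus hl0,
        ← d1_d2]
    have hk : kappaFun l q φ
        = l⁻¹ • fmul (subst2 (d1 (d2 S)) (minus l φ) φ) (fmul (minus l (d1 φ)) (d2 φ))
          - l • fmul (subst2 (d1 (d2 S)) (minus l φ) φ) (fmul (minus l (d2 φ)) (d1 φ)) := by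
      show fmul (subst2 (d1 (d2 S)) (minus l φ) φ)
          (l⁻¹ • fmul (minus l (d1 φ)) (d2 φ) - l • fmul (minus l (d2 φ)) (d1 φ)) = _
      rw [fmul_sub_right, fmul_smul_right, fmul_smul_right]
    have hkp : plus l (kappaFun l q φ)
        = l⁻¹ • fmul (subst2 (d1 (d2 S)) φ (plus l φ)) (fmul (d1 φ) (plus l (d2 φ)))
          - l • fmul (subst2 (d1 (d2 S)) φ (plus l φ)) (fmul (d2 φ) (plus l (d1 φ))) := by
      rw [hk, plus_sub, plus_smul, plus_smul, plus_fmul hl0, plus_fmul hl0,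
        plus_fmul hl0, plus_fmul hl0, plus_subst2 hl0, plus_minus hl0, plus_minus hl0,
        plus_minus hl0]
    rw [hd1E, hd2E, hkp, hk]
    simp only [fmul_add_left, fmul_smul_right, fmul_smul_left, fmul_assoc]
    rw [fmul_comm (d2 φ) (d1 φ), fmul_comm (d1 φ) (plus l (d2 φ)),
      fmul_comm (d2 φ) (plus l (d1 φ))]
    funext j k
    simp only [Pi.add_apply, Pi.sub_apply, Pi.smul_apply, smul_eq_mul]
    ring
  refine ⟨?_, main⟩
  rw [main]
  funext j k
  rcases eq_or_ne j k with rfl | hjk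
  · simp [avg, Etilde]
  · have he : ((j:ℤ) - (k:ℤ)) ≠ 0 := by omega
    have hne : (1 : ℂ) - l ^ ((j:ℤ)-(k:ℤ)) ≠ 0 :=
      sub_ne_zero.mpr (Ne.symm (zpow_ne_one_of_ne hl0 hru he))
    simp only [Pi.sub_apply, Etilde, avg, plus, hjk, if_false]
    rw [sub_zero, show kappaFun l q φ j k - l ^ ((j:ℤ)-(k:ℤ)) * kappaFun l q φ j k
        = kappaFun l q φ j k * (1 - l ^ ((j:ℤ)-(k:ℤ))) from by ring,
      mul_div_assoc, div_self hne, mul_one]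

end Treschev

end
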